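/- Let k be a field, n ≥ d ≥ 1, and S(n,d) the classical Schur algebra. Let ξ_{ω_d} be the idempotent ξ^1_{ω_d,ω_d} corresponding to the weight ω_d = (1^d). Then the map g ↦ ξ^g_{ω_d,ω_d} defines an algebra isomorphism k𝔖_d → ξ_{ω_d} S(n,d) ξ_{ω_d}. -/

import Mathlib

open Finset
open scoped Classical

noncomputable section

/-- The partial sum `c 0 + ⋯ + c (s-1)` of a composition `c`. -/
def psum (c : ℕ → ℕ) (s : ℕ) : ℕ := ∑ r ∈ Finset.range s, c r

/-- `c` is a composition of `d` with (at most) `n` parts. -/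
def IsComposition (n : ℕ) (c : ℕ → ℕ) (d : ℕ) : Prop :=
  (∀ s, n ≤ s → c s = 0) ∧ psum c n = d

/-- `c` is a partition of `d` with at most `n` parts. -/
def IsPartitionC (n : ℕ) (c : ℕ → ℕ) (d : ℕ) : Prop :=
  IsComposition n c d ∧ ∀ s t, s ≤ t → c t ≤ c s

/-- The transposed partition: `(transp n c) i = #{s < n | c s > i}`. -/
def transp (n : ℕ) (c : ℕ → ℕ) : ℕ → ℕ := fun i =>
  ((Finset.range n).filter fun s => i < c s).card

/-- The dominance order: `Dominates c c'` means `c ⊴ c'`. -/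
def Dominates (c c' : ℕ → ℕ) : Prop :=
  ∀ t, ∑ s ∈ Finset.range t, c s ≤ ∑ s ∈ Finset.range t, c' s

/-- The block index ("color") of the position `i` for the composition `c` with
`n` parts: position `i` lies in the `colorOf n c i`-th block. -/
def colorOf (n : ℕ) (c : ℕ → ℕ) (i : ℕ) : ℕ :=
  ((Finset.range n).filter fun s => psum c (s + 1) ≤ i).card

/-- The Young (standard parabolic) subgroup `𝔖_c ≤ 𝔖_d` of the composition `c`:
the stabilizer of the block coloring. -/
def young (n : ℕ) (c : ℕ → ℕ) (d : ℕ) : Subgroup (Equiv.Perm (Fin d)) where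
  carrier := {g | ∀ i : Fin d, colorOf n c (g i) = colorOf n c i}
  one_mem' := fun _ => rfl
  mul_mem' := by
    intro a b ha hb i
    simpa [Equiv.Perm.mul_apply] using (ha (b i)).trans (hb i)
  inv_mem' := by
    intro a ha i
    simpa using (ha (a⁻¹ i)).symm

/-- The Coxeter length of a permutation (number of inversions). -/
def lenPerm (d : ℕ) (w : Equiv.Perm (Fin d)) : ℕ :=
  (Finset.univ.filter fun p : Fin d × Fin d => p.1 < p.2 ∧ w p.2 < w p.1).card

/-- `g` is the minimal-length representative of its double coset
`𝔖_{cl} g 𝔖_{cr}` (an element of `^{cl}𝒟^{cr}`). -/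
def IsMinDC (d : ℕ) (nl : ℕ) (cl : ℕ → ℕ) (nr : ℕ) (cr : ℕ → ℕ)
    (g : Equiv.Perm (Fin d)) : Prop :=
  ∀ a ∈ young nl cl d, ∀ b ∈ young nr cr d, lenPerm d g ≤ lenPerm d (a * g * b)

/-- `g` is the minimal-length representative of its coset `𝔖_c g`
(an element of `^{c}𝒟`). -/
def IsMinL (d : ℕ) (n : ℕ) (c : ℕ → ℕ) (g : Equiv.Perm (Fin d)) : Prop :=
  ∀ h ∈ young n c d, lenPerm d g ≤ lenPerm d (h * g)

/-- `x_c = ∑_{g ∈ 𝔖_c} g` in the group algebra `k𝔖_d`. -/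
def xEl (k : Type) [CommRing k] (n : ℕ) (c : ℕ → ℕ) (d : ℕ) :
    MonoidAlgebra k (Equiv.Perm (Fin d)) :=
  ∑ g ∈ Finset.univ.filter fun g => g ∈ young n c d,
    MonoidAlgebra.of k (Equiv.Perm (Fin d)) g

/-- `y_c = ∑_{g ∈ 𝔖_c} sgn(g) g` in the group algebra `k𝔖_d`. -/
def yEl (k : Type) [CommRing k] (n : ℕ) (c : ℕ → ℕ) (d : ℕ) :
    MonoidAlgebra k (Equiv.Perm (Fin d)) :=
  ∑ g ∈ Finset.univ.filter fun g => g ∈ young n c d,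
    ((Equiv.Perm.sign g : ℤ) : k) • MonoidAlgebra.of k (Equiv.Perm (Fin d)) g

/-- `X^g_{μ,λ} = ∑_{w ∈ 𝔖_μ g 𝔖_λ ∩ ^μ𝒟} w`. -/
def Xg (k : Type) [CommRing k] (d : ℕ) (nμ : ℕ) (cμ : ℕ → ℕ) (nl : ℕ) (cl : ℕ → ℕ)
    (g : Equiv.Perm (Fin d)) : MonoidAlgebra k (Equiv.Perm (Fin d)) :=
  ∑ w ∈ Finset.univ.filter fun w =>
      (∃ a ∈ young nμ cμ d, ∃ b ∈ young nl cl d, w = a * g * b) ∧ IsMinL d nμ cμ w,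
    MonoidAlgebra.of k (Equiv.Perm (Fin d)) w

/-- `Y^g_{μ,λ} = ∑_{w ∈ 𝔖_μ g 𝔖_λ ∩ ^μ𝒟} sgn(w) w`. -/
def Yg (k : Type) [CommRing k] (d : ℕ) (nμ : ℕ) (cμ : ℕ → ℕ) (nl : ℕ) (cl : ℕ → ℕ)
    (g : Equiv.Perm (Fin d)) : MonoidAlgebra k (Equiv.Perm (Fin d)) :=
  ∑ w ∈ Finset.univ.filter fun w =>
      (∃ a ∈ young nμ cμ d, ∃ b ∈ young nl cl d, w = a * g * b) ∧ IsMinL d nμ cμ w,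
    ((Equiv.Perm.sign w : ℤ) : k) • MonoidAlgebra.of k (Equiv.Perm (Fin d)) w

/-- The permutation module `M^c = k𝔖_d · x_c` as a left ideal of `k𝔖_d`. -/
def Mmod (k : Type) [CommRing k] (n : ℕ) (c : ℕ → ℕ) (d : ℕ) :
    Submodule (MonoidAlgebra k (Equiv.Perm (Fin d))) (MonoidAlgebra k (Equiv.Perm (Fin d))) :=
  Submodule.span (MonoidAlgebra k (Equiv.Perm (Fin d))) {xEl k n c d}

/-- The signed permutation module `N^c = k𝔖_d · y_c` as a left ideal of `k𝔖_d`. -/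
def Nmod (k : Type) [CommRing k] (n : ℕ) (c : ℕ → ℕ) (d : ℕ) :
    Submodule (MonoidAlgebra k (Equiv.Perm (Fin d))) (MonoidAlgebra k (Equiv.Perm (Fin d))) :=
  Submodule.span (MonoidAlgebra k (Equiv.Perm (Fin d))) {yEl k n c d}

instance (k : Type) [CommRing k] (d : ℕ)
    (p : Submodule (MonoidAlgebra k (Equiv.Perm (Fin d)))
      (MonoidAlgebra k (Equiv.Perm (Fin d)))) :
    SMulCommClass (MonoidAlgebra k (Equiv.Perm (Fin d))) k ↥p where
  smul_comm a c x := Subtype.ext <| by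
    show a • (c • (x : MonoidAlgebra k (Equiv.Perm (Fin d)))) =
      c • (a • (x : MonoidAlgebra k (Equiv.Perm (Fin d))))
    exact (smul_comm c a ((x : MonoidAlgebra k (Equiv.Perm (Fin d))))).symm

/-- The index set `Λ(n,d)` of compositions of `d` with at most `n` parts. -/
def CompT (n d : ℕ) : Type := {c : ℕ → ℕ // IsComposition n c d}

/-- The direct sum `⊕_{ν ∈ Λ(n,d)} M^ν` (realized as a product, the index set
being finite). -/
abbrev MMs (k : Type) [CommRing k] (n d : ℕ) : Type :=
  ∀ ν : CompT n d, ↥(Mmod k n ν.1 d)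

/-- The direct sum `⊕_{ν ∈ Λ(n,d)} N^ν`. -/
abbrev NNs (k : Type) [CommRing k] (n d : ℕ) : Type :=
  ∀ ν : CompT n d, ↥(Nmod k n ν.1 d)

/-- The weight idempotent `ξ_ν = ξ^1_{ν,ν}`: the projection of `⊕_ρ M^ρ` onto the
summand `M^ν`. -/
def xiIdem (k : Type) [CommRing k] (n d : ℕ) (ν : CompT n d) :
    Module.End (MonoidAlgebra k (Equiv.Perm (Fin d))) (MMs k n d) where
  toFun v := fun ρ => if ρ = ν then v ρ else 0
  map_add' v w := by
    funext ρ
    by_cases h : ρ = ν <;> simp [h]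
  map_smul' a v := by
    funext ρ
    by_cases h : ρ = ν <;> simp [h]

/-- The composition `ω_d = (1^d)`. -/
def omegaC (d : ℕ) : ℕ → ℕ := fun s => if s < d then 1 else 0

lemma omega_comp (n d : ℕ) (h : d ≤ n) : IsComposition n (omegaC d) d := by
  refine ⟨fun s hs => ?_, ?_⟩
  · have : ¬ s < d := by omega
    simp [omegaC, this]
  · have h1 : ((Finset.range n).filter fun r => r < d) = Finset.range d := by
      ext r
      simp only [Finset.mem_filter, Finset.mem_range]
      omega
    simp [psum, omegaC, Finset.sum_ite_eq, Finset.sum_boole, h1]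

/-- `ω_d` as an element of `Λ(n,d)`. -/
def omegaElt (n d : ℕ) (h : d ≤ n) : CompT n d := ⟨omegaC d, omega_comp n d h⟩

section Aux

lemma psum_omega (d m : ℕ) : psum (omegaC d) m = min m d := by
  have h1 : ((Finset.range m).filter fun r => r < d) = Finset.range (min m d) := by
    ext r; simp only [Finset.mem_filter, Finset.mem_range]; omega
  simp [psum, omegaC, Finset.sum_boole, h1]

lemma color_omega (n d i : ℕ) (hi : i < d) (hn : d ≤ n) :
    colorOf n (omegaC d) i = i := by
  have h1 : ((Finset.range n).filter fun s => psum (omegaC d) (s + 1) ≤ i)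
      = Finset.range i := by
    ext s
    simp only [Finset.mem_filter, Finset.mem_range, psum_omega]
    omega
  simp [colorOf, h1]

lemma young_omega (n d : ℕ) (hn : d ≤ n) (g : Equiv.Perm (Fin d)) :
    g ∈ young n (omegaC d) d ↔ g = 1 := by
  constructor
  · intro hg
    ext i
    have := hg i
    rwa [color_omega n d _ (g i).2 hn, color_omega n d _ i.2 hn] at this
  · rintro rfl i; rfl

lemma xEl_omega (k : Type) [Field k] (n d : ℕ) (hn : d ≤ n) :
    xEl k n (omegaC d) d = 1 := by
  have h1 : (Finset.univ.filter fun g : Equiv.Perm (Fin d) => g ∈ young n (omegaC d) d)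
      = {1} := by
    ext g; simp [young_omega n d hn]
  simp [xEl, h1]
  rfl

lemma memM (k : Type) [Field k] (n d : ℕ) (hn : d ≤ n)
    (y : MonoidAlgebra k (Equiv.Perm (Fin d))) : y ∈ Mmod k n (omegaC d) d := by
  have : y = y • xEl k n (omegaC d) d := by
    rw [xEl_omega k n d hn]; simp [smul_eq_mul]
  rw [this]
  exact Submodule.smul_mem _ _ (Submodule.mem_span_singleton_self _)

variable (k : Type) [Field k] (n d : ℕ) (hnd : d ≤ n)

/-- The endomorphism `v ↦ (ρ ↦ if ρ = ω then v ω * x else 0)`. -/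
def kend (x : MonoidAlgebra k (Equiv.Perm (Fin d))) :
    Module.End (MonoidAlgebra k (Equiv.Perm (Fin d))) (MMs k n d) where
  toFun v := fun ρ =>
    if h : ρ = omegaElt n d hnd then
      ⟨(v ρ : MonoidAlgebra k (Equiv.Perm (Fin d))) * x, by
        rw [h]; exact memM k n d hnd _⟩
    else 0
  map_add' v w := by
    funext ρ
    by_cases h : ρ = omegaElt n d hnd <;> simp [h, add_mul]
  map_smul' a v := by
    funext ρ
    by_cases h : ρ = omegaElt n d hnd <;>
      simp [h, smul_eq_mul, mul_assoc]

lemma kend_apply (x : MonoidAlgebra k (Equiv.Perm (Fin d))) (v : MMs k n d) (ρ : CompT n d) :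
    ((kend k n d hnd x v ρ : ↥(Mmod k n ρ.1 d)) : MonoidAlgebra k (Equiv.Perm (Fin d))) =
      if ρ = omegaElt n d hnd then
        (v ρ : MonoidAlgebra k (Equiv.Perm (Fin d))) * x else 0 := by
  by_cases h : ρ = omegaElt n d hnd <;> simp [kend, h]

/-- The vector that is `1` at `ω` and `0` elsewhere. -/
def eVec : MMs k n d := fun ρ =>
  if h : ρ = omegaElt n d hnd then
    ⟨1, by rw [h]; exact memM k n d hnd _⟩ else 0

end Aux

/-!
Statement 11: Let `k` be a field and `n ≥ d ≥ 1`.  In the Schur algebra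
`S(n,d) = End_{k𝔖_d}(⊕_{ν∈Λ(n,d)} M^ν)^{sop}`, the map `g ↦ ξ^g_{ω_d,ω_d}` defines
an algebra isomorphism `k𝔖_d → ξ_{ω_d} S(n,d) ξ_{ω_d}` onto the corner of the weight
idempotent `ξ_{ω_d}`, where `ω_d = (1^d)`.  (Since the trivial Young subgroup
`𝔖_{ω_d}` is trivial, `ξ^g_{ω_d,ω_d}` is the endomorphism killing all summands
`M^ρ` with `ρ ≠ ω_d` and acting on `M^{ω_d} = k𝔖_d` by right multiplication
with `g`.)
-/

set_option maxHeartbeats 1000000 in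
theorem stmt11 (k : Type) [Field k] (n d : ℕ) (hd : 1 ≤ d) (hnd : d ≤ n) :
    ∃ κ : MonoidAlgebra k (Equiv.Perm (Fin d)) →ₗ[k]
        (Module.End (MonoidAlgebra k (Equiv.Perm (Fin d))) (MMs k n d))ᵐᵒᵖ,
      -- `κ` is an isomorphism of `k`-algebras onto the corner `ξ_{ω_d} S(n,d) ξ_{ω_d}`:
      Function.Injective κ ∧
      (∀ x y, κ (x * y) = κ x * κ y) ∧
      κ 1 = MulOpposite.op (xiIdem k n d (omegaElt n d hnd)) ∧
      Set.range κ =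
        {z | MulOpposite.op (xiIdem k n d (omegaElt n d hnd)) * z *
            MulOpposite.op (xiIdem k n d (omegaElt n d hnd)) = z} ∧
      -- and `κ g = ξ^g_{ω_d,ω_d}`:
      ∀ g : Equiv.Perm (Fin d), ∀ v : MMs k n d, ∀ ρ : CompT n d,
        ((MulOpposite.unop (κ (MonoidAlgebra.of k (Equiv.Perm (Fin d)) g))) v ρ :
            MonoidAlgebra k (Equiv.Perm (Fin d))) =
          if ρ = omegaElt n d hnd then
            (v (omegaElt n d hnd) : MonoidAlgebra k (Equiv.Perm (Fin d))) *
              MonoidAlgebra.of k (Equiv.Perm (Fin d)) g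
          else 0 := by
  classical
  set ω := omegaElt n d hnd with hω
  set ξ := xiIdem k n d ω with hξ
  have coe_eVec : ∀ ρ : CompT n d,
      ((eVec k n d hnd ρ : ↥(Mmod k n ρ.1 d)) : MonoidAlgebra k (Equiv.Perm (Fin d))) =
        if ρ = ω then 1 else 0 := by
    intro ρ
    by_cases h : ρ = omegaElt n d hnd <;> simp [eVec, h, hω]
  -- `ξ v = (v ω) • eVec`
  have xi_eq : ∀ v : MMs k n d,
      ξ v = ((v ω : MonoidAlgebra k (Equiv.Perm (Fin d))) • eVec k n d hnd) := by
    intro v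
    funext ρ
    by_cases h : ρ = ω
    · subst h
      apply Subtype.ext
      simp [hξ, xiIdem, eVec, smul_eq_mul, hω]
    · apply Subtype.ext
      have h' : ¬ρ = omegaElt n d hnd := fun e => h (e.trans hω.symm)
      simp [hξ, xiIdem, eVec, h, hω, h']
  have kend_eVec : ∀ x : MonoidAlgebra k (Equiv.Perm (Fin d)),
      ((kend k n d hnd x (eVec k n d hnd) ω : ↥(Mmod k n ω.1 d)) :
        MonoidAlgebra k (Equiv.Perm (Fin d))) = x := by
    intro x
    rw [kend_apply, coe_eVec]
    simp [hω]
  refine ⟨{ toFun := fun x => MulOpposite.op (kend k n d hnd x),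
            map_add' := ?_, map_smul' := ?_ }, ?_, ?_, ?_, ?_, ?_⟩
  · intro x y
    rw [← MulOpposite.op_add, MulOpposite.op_inj]
    refine LinearMap.ext fun v => funext fun ρ => Subtype.ext ?_
    simp [kend_apply, mul_add, apply_ite
      (fun t : MonoidAlgebra k (Equiv.Perm (Fin d)) => t)]
    by_cases h : ρ = omegaElt n d hnd <;> simp [h]
  · intro c x
    simp only [RingHom.id_apply]
    rw [← MulOpposite.op_smul, MulOpposite.op_inj]
    refine LinearMap.ext fun v => funext fun ρ => Subtype.ext ?_
    by_cases h : ρ = ω <;> simp [kend_apply, h, mul_smul_comm]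
  · -- injectivity
    intro x y h
    have h2 : kend k n d hnd x = kend k n d hnd y := MulOpposite.op_injective h
    have := congrArg (fun f : Module.End (MonoidAlgebra k (Equiv.Perm (Fin d))) (MMs k n d) =>
      ((f (eVec k n d hnd) ω : ↥(Mmod k n ω.1 d)) :
        MonoidAlgebra k (Equiv.Perm (Fin d)))) h2
    simpa [kend_eVec] using this
  · -- multiplicativity
    intro x y
    show MulOpposite.op (kend k n d hnd (x * y)) =
      MulOpposite.op (kend k n d hnd x) * MulOpposite.op (kend k n d hnd y)
    rw [← MulOpposite.op_mul, MulOpposite.op_inj]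
    refine LinearMap.ext fun v => funext fun ρ => Subtype.ext ?_
    show _ = ((kend k n d hnd y (kend k n d hnd x v) ρ : ↥(Mmod k n ρ.1 d)) :
      MonoidAlgebra k (Equiv.Perm (Fin d)))
    rw [kend_apply, kend_apply]
    by_cases h : ρ = ω
    · subst h
      rw [if_pos rfl, if_pos rfl, kend_apply, if_pos rfl, mul_assoc]
    · rw [if_neg h, if_neg h]
  · -- κ 1 = op ξ
    show MulOpposite.op (kend k n d hnd 1) = MulOpposite.op (xiIdem k n d ω)
    rw [MulOpposite.op_inj]
    refine LinearMap.ext fun v => funext fun ρ => Subtype.ext ?_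
    rw [kend_apply]
    by_cases h : ρ = ω
    · subst h
      simp [hξ, xiIdem, hω]
    · have h' : ¬ρ = omegaElt n d hnd := fun e => h (e.trans hω.symm)
      simp [hξ, xiIdem, h, hω, h']
  · -- range
    ext z
    simp only [Set.mem_range, Set.mem_setOf_eq]
    constructor
    · rintro ⟨x, rfl⟩
      show MulOpposite.op (xiIdem k n d ω) * MulOpposite.op (kend k n d hnd x) *
          MulOpposite.op (xiIdem k n d ω) = MulOpposite.op (kend k n d hnd x)
      rw [← MulOpposite.op_mul, ← MulOpposite.op_mul, MulOpposite.op_inj]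
      refine LinearMap.ext fun v => funext fun ρ => Subtype.ext ?_
      show ((ξ (kend k n d hnd x (ξ v)) ρ : ↥(Mmod k n ρ.1 d)) :
          MonoidAlgebra k (Equiv.Perm (Fin d))) = _
      rw [kend_apply]
      by_cases h : ρ = ω
      · subst h
        have : ((ξ v ω : ↥(Mmod k n ω.1 d)) : MonoidAlgebra k (Equiv.Perm (Fin d)))
            = ((v ω : ↥(Mmod k n ω.1 d)) : MonoidAlgebra k (Equiv.Perm (Fin d))) := by
          simp [hξ, xiIdem]
        simp [hξ, xiIdem, this, kend_apply]
      · have h' : ¬ρ = omegaElt n d hnd := fun e => h (e.trans hω.symm)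
        simp [hξ, xiIdem, h, kend_apply, h']
    · intro hz
      set f := MulOpposite.unop z with hf
      have hz' : ξ * (f * ξ) = f := by
        have := congrArg MulOpposite.unop hz
        simpa [mul_assoc] using this
      refine ⟨((f (eVec k n d hnd) ω : ↥(Mmod k n ω.1 d)) :
        MonoidAlgebra k (Equiv.Perm (Fin d))), ?_⟩
      show MulOpposite.op (kend k n d hnd _) = z
      rw [show z = MulOpposite.op f from (MulOpposite.op_unop z).symm, MulOpposite.op_inj]
      refine LinearMap.ext fun v => funext fun ρ => Subtype.ext ?_
      have hfv : f v = ξ (f (ξ v)) := by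
        conv_lhs => rw [← hz']
        rfl
      rw [kend_apply, hfv, xi_eq v, map_smul]
      by_cases h : ρ = ω
      · subst h
        simp [hξ, xiIdem, smul_eq_mul, hω]
      · have h' : ¬ρ = omegaElt n d hnd := fun e => h (e.trans hω.symm)
        simp [hξ, xiIdem, h, h']
  · -- formula
    intro g v ρ
    show ((kend k n d hnd (MonoidAlgebra.of k (Equiv.Perm (Fin d)) g) v ρ :
        ↥(Mmod k n ρ.1 d)) : MonoidAlgebra k (Equiv.Perm (Fin d))) = _
    rw [kend_apply]
    by_cases h : ρ = ω
    · subst h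
      simp [hω]
    · have h' : ¬ρ = omegaElt n d hnd := fun e => h (e.trans hω.symm)
      simp [h, hω, h']
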